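/- Let f be a positive strictly convex function on (0,l), let θ_1,…,θ_n ∈ (0,l) with ∑ θ_i = ml where 0 < m < n, and set σ = ml/n. Then for every positive integer α, (∑_{i=1}^n f(θ_i))^{2α} − (n f(σ))^α (∑_{i=1}^n f(θ_i))^α ≥ (f(σ))^α [(∑_{i=1}^n f(θ_i))^α − (n f(σ))^α], with equality if and only if θ_1 = θ_2 = ⋯ = θ_n = σ. -/

import Mathlib

theorem stmt1 (n : ℕ) (hn : 2 ≤ n) (l m : ℝ) (hl : 0 < l) (hm0 : 0 < m) (hmn : m < n)
    (f : ℝ → ℝ) (hfpos : ∀ x ∈ Set.Ioo (0:ℝ) l, 0 < f x)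
    (hfconv : StrictConvexOn ℝ (Set.Ioo (0:ℝ) l) f)
    (θ : Fin n → ℝ) (hθ : ∀ i, θ i ∈ Set.Ioo (0:ℝ) l)
    (hsum : ∑ i, θ i = m * l) (α : ℕ) (hα : 0 < α) :
    (f (m * l / n)) ^ α * ((∑ i, f (θ i)) ^ α - ((n : ℝ) * f (m * l / n)) ^ α)
      ≤ (∑ i, f (θ i)) ^ (2 * α) - ((n : ℝ) * f (m * l / n)) ^ α * (∑ i, f (θ i)) ^ α
    ∧ ((∑ i, f (θ i)) ^ (2 * α) - ((n : ℝ) * f (m * l / n)) ^ α * (∑ i, f (θ i)) ^ α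
        = (f (m * l / n)) ^ α * ((∑ i, f (θ i)) ^ α - ((n : ℝ) * f (m * l / n)) ^ α)
      ↔ ∀ i, θ i = m * l / n) := by
  have hnR : (0:ℝ) < (n:ℝ) := by
    have : (0:ℕ) < n := by omega
    exact_mod_cast this
  have hn2 : (2:ℝ) ≤ (n:ℝ) := by exact_mod_cast hn
  set σ : ℝ := m * l / n with hσdef
  have hσmem : σ ∈ Set.Ioo (0:ℝ) l := by
    constructor
    · positivity
    · rw [hσdef, div_lt_iff₀ hnR]; nlinarith
  have hc : 0 < f σ := hfpos _ hσmem
  -- Jensen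
  have hwsum : ∑ _i : Fin n, (1/(n:ℝ)) = 1 := by
    simp [Finset.sum_const]
    field_simp
  have hσeq : ∑ i, (1/(n:ℝ)) • θ i = σ := by
    rw [← Finset.smul_sum, hsum, hσdef, smul_eq_mul]
    ring
  have hJ : (n : ℝ) * f σ ≤ ∑ i, f (θ i) := by
    have h := hfconv.convexOn.map_sum_le (t := Finset.univ) (w := fun _ => 1/(n:ℝ))
      (p := θ) (fun i _ => by positivity) hwsum (fun i _ => hθ i)
    rw [hσeq] at h
    have h2 : ∑ i, (1/(n:ℝ)) • f (θ i) = (1/(n:ℝ)) * ∑ i, f (θ i) := by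
      rw [← Finset.smul_sum]; simp
    rw [h2] at h
    rw [← mul_le_mul_iff_right₀ (show (0:ℝ) < 1/(n:ℝ) by positivity)]
    calc (1/(n:ℝ)) * ((n:ℝ) * f σ) = f σ := by field_simp
    _ ≤ (1/(n:ℝ)) * ∑ i, f (θ i) := h
  have hS0 : (0:ℝ) < ∑ i, f (θ i) := by nlinarith
  have hEq : (∑ i, f (θ i) = (n:ℝ) * f σ) ↔ ∀ i, θ i = σ := by
    constructor
    · intro h
      by_contra hcon
      push_neg at hcon
      obtain ⟨j, hj⟩ := hcon
      have hex : ∃ k, θ k ≠ θ j := by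
        by_contra hall
        push_neg at hall
        have : ∑ i, θ i = (n:ℝ) * θ j := by
          rw [Finset.sum_congr rfl (fun i _ => hall i)]
          simp [mul_comm]
        apply hj
        rw [hσdef, ← hsum, this]
        field_simp
      obtain ⟨k, hk⟩ := hex
      have hlt := hfconv.map_sum_lt (t := Finset.univ) (w := fun _ => 1/(n:ℝ))
        (p := θ) (fun i _ => by positivity) hwsum (fun i _ => hθ i)
        ⟨k, Finset.mem_univ k, j, Finset.mem_univ j, hk⟩
      rw [hσeq] at hlt
      have h2 : ∑ i, (1/(n:ℝ)) • f (θ i) = (1/(n:ℝ)) * ∑ i, f (θ i) := by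
        rw [← Finset.smul_sum]; simp
      rw [h2, h] at hlt
      have : (1/(n:ℝ)) * ((n:ℝ) * f σ) = f σ := by field_simp
      rw [this] at hlt
      exact lt_irrefl _ hlt
    · intro h
      rw [Finset.sum_congr rfl (fun i _ => by rw [h i])]
      simp [mul_comm]
  -- abbreviations
  set S : ℝ := ∑ i, f (θ i) with hSdef
  have hBA : ((n:ℝ) * f σ) ^ α ≤ S ^ α :=
    pow_le_pow_left₀ (by positivity) hJ α
  have hCA : (f σ) ^ α < S ^ α := by
    apply pow_lt_pow_left₀ _ (le_of_lt hc) (by omega)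
    nlinarith
  have hkey : S ^ (2*α) = S ^ α * S ^ α := by
    rw [two_mul, pow_add]
  constructor
  · rw [hkey]; nlinarith
  · rw [hkey]
    constructor
    · intro h
      rw [← hEq]
      have hfac : (S ^ α - (f σ) ^ α) * (S ^ α - ((n:ℝ) * f σ) ^ α) = 0 := by nlinarith
      have hAB : S ^ α = ((n:ℝ) * f σ) ^ α := by
        rcases mul_eq_zero.1 hfac with h1 | h1
        · nlinarith
        · linarith
      exact pow_left_strictMonoOn₀ (by omega : α ≠ 0) |>.injOn
        (Set.mem_Ici.2 (le_of_lt hS0)) (Set.mem_Ici.2 (by positivity)) hAB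
    · intro h
      have hs : S = (n:ℝ) * f σ := hEq.2 h
      rw [hs]
      ring
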